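/- Let ε > 0. There exists a constant C₂ > 0, depending only on ε, with the following property. Consider the disjoint union of the plane part P = {x ∈ ℝ² : |x| ≥ ε} and the pole part [0, ∞), with pseudometric ρ given by: ρ(x, y) = min(|x − y|, (|x| − ε) + (|y| − ε)) for x, y ∈ P; ρ(x, s) = (|x| − ε) + s for x ∈ P and s ∈ [0, ∞); and ρ(s, s') = |s − s'| for s, s' ∈ [0, ∞). Let Φ map P ∋ x to (F_ε(x), 0) ∈ ℝ³ and [0, ∞) ∋ s to (0, 0, s) ∈ ℝ³. Then for every pair of points u, v in this disjoint union, min(ρ(u, v), ρ(u, v)²) ≤ C₂·‖Φ(u) − Φ(v)‖, where ‖·‖ is the Euclidean norm on ℝ³. -/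
import Mathlib


/-- The projection map `F_ε(x) = ((|x| − ε)/|x|)·x`, defined on `{x ∈ ℝ² : |x| ≥ ε}`,
used to embed the plane component of the space of varying dimension into `ℝ³`. -/
noncomputable def Fmap (ε : ℝ) (x : EuclideanSpace ℝ (Fin 2)) : EuclideanSpace ℝ (Fin 2) :=
  ((‖x‖ - ε) / ‖x‖) • x

/-- The geodesic distance `ρ` on the disjoint union of the plane part
`P = {x ∈ ℝ² : |x| ≥ ε}` (left summand) and the pole part `[0, ∞)` (right summand). -/
noncomputable def rhoVD (ε : ℝ) :
    (EuclideanSpace ℝ (Fin 2)) ⊕ ℝ → (EuclideanSpace ℝ (Fin 2)) ⊕ ℝ → ℝ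
  | Sum.inl x, Sum.inl y => min ‖x - y‖ ((‖x‖ - ε) + (‖y‖ - ε))
  | Sum.inl x, Sum.inr s => (‖x‖ - ε) + s
  | Sum.inr s, Sum.inl x => (‖x‖ - ε) + s
  | Sum.inr s, Sum.inr s' => |s - s'|

/-- The embedding `Φ` of the space of varying dimension into `ℝ³`: a plane point `x`
is sent to `(F_ε(x), 0)` and a pole point `s` to `(0, 0, s)`. -/
noncomputable def PhiVD (ε : ℝ) :
    (EuclideanSpace ℝ (Fin 2)) ⊕ ℝ → EuclideanSpace ℝ (Fin 3)
  | Sum.inl x => (WithLp.equiv 2 (Fin 3 → ℝ)).symm ![Fmap ε x 0, Fmap ε x 1, 0]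
  | Sum.inr s => (WithLp.equiv 2 (Fin 3 → ℝ)).symm ![0, 0, s]

/-- Membership of a point of the disjoint union in the state space: a plane point must
satisfy `|x| ≥ ε` and a pole point must satisfy `s ≥ 0`. -/
def memVD (ε : ℝ) : (EuclideanSpace ℝ (Fin 2)) ⊕ ℝ → Prop
  | Sum.inl x => ε ≤ ‖x‖
  | Sum.inr s => 0 ≤ s

open scoped RealInnerProductSpace

lemma normPhi_ll (v w : EuclideanSpace ℝ (Fin 2)) :
    ‖((WithLp.equiv 2 (Fin 3 → ℝ)).symm ![v 0, v 1, (0:ℝ)] : EuclideanSpace ℝ (Fin 3)) -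
      (WithLp.equiv 2 (Fin 3 → ℝ)).symm ![w 0, w 1, (0:ℝ)]‖ = ‖v - w‖ := by
  rw [EuclideanSpace.norm_eq, EuclideanSpace.norm_eq]
  simp [Fin.sum_univ_three, Fin.sum_univ_two]

lemma normPhi_lr (v : EuclideanSpace ℝ (Fin 2)) (s : ℝ) :
    ‖((WithLp.equiv 2 (Fin 3 → ℝ)).symm ![v 0, v 1, (0:ℝ)] : EuclideanSpace ℝ (Fin 3)) -
      (WithLp.equiv 2 (Fin 3 → ℝ)).symm ![0, 0, s]‖ ^ 2 = ‖v‖ ^ 2 + s ^ 2 := by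
  rw [PiLp.norm_sq_eq_of_L2, PiLp.norm_sq_eq_of_L2]
  simp [Fin.sum_univ_three, Fin.sum_univ_two]

lemma normPhi_rr (s s' : ℝ) :
    ‖((WithLp.equiv 2 (Fin 3 → ℝ)).symm ![0, 0, s] : EuclideanSpace ℝ (Fin 3)) -
      (WithLp.equiv 2 (Fin 3 → ℝ)).symm ![0, 0, s']‖ = |s - s'| := by
  rw [EuclideanSpace.norm_eq]
  simp [Fin.sum_univ_three, Real.sqrt_sq_eq_abs]

lemma norm_Fmap {ε : ℝ} (hε : 0 < ε) {x : EuclideanSpace ℝ (Fin 2)} (hx : ε ≤ ‖x‖) :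
    ‖Fmap ε x‖ = ‖x‖ - ε := by
  have hx0 : 0 < ‖x‖ := lt_of_lt_of_le hε hx
  rw [Fmap, norm_smul, Real.norm_eq_abs,
    abs_of_nonneg (div_nonneg (by linarith) hx0.le), div_mul_cancel₀ _ hx0.ne']

/-- The key scalar inequality behind Statement 5, with `t = 1 - cos θ`. -/
lemma coreVD (a b t ε D L : ℝ) (ha : 0 ≤ a) (hb : 0 ≤ b) (ht2 : t ≤ 2)
    (hε : 0 < ε) (hD : 0 ≤ D) (hL : 0 ≤ L)
    (hDsq : D ^ 2 = (a - b) ^ 2 + 2 * a * b * t)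
    (hLsq : L ^ 2 = (a - b) ^ 2 + 2 * (a + ε) * (b + ε) * t) :
    min (min L (a + b)) ((min L (a + b)) ^ 2) ≤ 5 * (1 + ε) * D := by
  have hab : 0 ≤ a + b := by linarith
  have hm0 : 0 ≤ min L (a + b) := le_min hL hab
  have hkey : t * (a + b) ^ 2 ≤ 4 * D ^ 2 := by
    nlinarith [sq_nonneg (a - b), mul_nonneg (mul_nonneg ha hb) (le_of_eq rfl)]
  have hXsq : ((a + b) * L) ^ 2 ≤ (D * (a + b) + 4 * ε * D) ^ 2 := by
    nlinarith [mul_nonneg (mul_nonneg hε.le hab) (sub_nonneg.2 hkey),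
      mul_nonneg (mul_nonneg hε.le hε.le) (sub_nonneg.2 hkey),
      mul_nonneg (mul_nonneg hε.le hε.le) (sq_nonneg D)]
  have hX : (a + b) * L ≤ D * (a + b) + 4 * ε * D := by
    have h1 : 0 ≤ (a + b) * L := mul_nonneg hab hL
    have h2 : 0 ≤ D * (a + b) + 4 * ε * D := by positivity
    nlinarith [hXsq]
  rcases le_total (a + b) ε with hc | hc
  · calc min (min L (a + b)) ((min L (a + b)) ^ 2) ≤ (min L (a + b)) ^ 2 := min_le_right _ _
      _ ≤ (a + b) * L := by
          rw [pow_two]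
          exact mul_le_mul (min_le_right _ _) (min_le_left _ _) hm0 hab
      _ ≤ 5 * (1 + ε) * D := by nlinarith [hX, mul_nonneg hD hab]
  · have hL5 : L ≤ 5 * D := by
      have hpos : 0 < a + b := lt_of_lt_of_le hε hc
      have : (a + b) * L ≤ (a + b) * (5 * D) := by nlinarith [hX, mul_nonneg hD (sub_nonneg.2 hc)]
      exact le_of_mul_le_mul_left this hpos
    calc min (min L (a + b)) ((min L (a + b)) ^ 2) ≤ min L (a + b) := min_le_left _ _
      _ ≤ L := min_le_left _ _
      _ ≤ 5 * (1 + ε) * D := by nlinarith [mul_nonneg hε.le hD]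

lemma plane_plane_case {ε : ℝ} (hε : 0 < ε) (x y : EuclideanSpace ℝ (Fin 2))
    (hx : ε ≤ ‖x‖) (hy : ε ≤ ‖y‖) :
    min (min ‖x - y‖ ((‖x‖ - ε) + (‖y‖ - ε))) ((min ‖x - y‖ ((‖x‖ - ε) + (‖y‖ - ε))) ^ 2) ≤
      5 * (1 + ε) * ‖Fmap ε x - Fmap ε y‖ := by
  have hx0 : 0 < ‖x‖ := lt_of_lt_of_le hε hx
  have hy0 : 0 < ‖y‖ := lt_of_lt_of_le hε hy
  have hrR : 0 < ‖x‖ * ‖y‖ := mul_pos hx0 hy0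
  set t : ℝ := 1 - ⟪x, y⟫ / (‖x‖ * ‖y‖) with ht_def
  have hip : |⟪x, y⟫| ≤ ‖x‖ * ‖y‖ := abs_real_inner_le_norm x y
  have ht2 : t ≤ 2 := by
    have h1 : -(‖x‖ * ‖y‖) ≤ ⟪x, y⟫ := neg_le_of_abs_le hip
    have h2 : (-1 : ℝ) ≤ ⟪x, y⟫ / (‖x‖ * ‖y‖) := by
      rw [le_div_iff₀ hrR]; linarith
    rw [ht_def]; linarith
  have hDsq : ‖Fmap ε x - Fmap ε y‖ ^ 2 =
      ((‖x‖ - ε) - (‖y‖ - ε)) ^ 2 + 2 * (‖x‖ - ε) * (‖y‖ - ε) * t := by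
    have hinner : ⟪Fmap ε x, Fmap ε y⟫ =
        ((‖x‖ - ε) / ‖x‖) * (((‖y‖ - ε) / ‖y‖) * ⟪x, y⟫) := by
      rw [Fmap, Fmap, real_inner_smul_left, real_inner_smul_right]
    rw [norm_sub_sq_real, norm_Fmap hε hx, norm_Fmap hε hy, hinner, ht_def]
    field_simp
    ring
  have hLsq : ‖x - y‖ ^ 2 =
      ((‖x‖ - ε) - (‖y‖ - ε)) ^ 2 + 2 * ((‖x‖ - ε) + ε) * ((‖y‖ - ε) + ε) * t := by
    rw [norm_sub_sq_real, ht_def]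
    field_simp
    ring
  exact coreVD (‖x‖ - ε) (‖y‖ - ε) t ε _ _ (by linarith) (by linarith) ht2 hε
    (norm_nonneg _) (norm_nonneg _) hDsq hLsq

lemma plane_pole_case {ε : ℝ} (hε : 0 < ε) (x : EuclideanSpace ℝ (Fin 2)) (s N : ℝ)
    (hx : ε ≤ ‖x‖) (hs : 0 ≤ s) (hN : 0 ≤ N)
    (hNsq : N ^ 2 = (‖x‖ - ε) ^ 2 + s ^ 2) :
    min ((‖x‖ - ε) + s) (((‖x‖ - ε) + s) ^ 2) ≤ 5 * (1 + ε) * N := by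
  have ha : 0 ≤ ‖x‖ - ε := by linarith
  have h1 : ‖x‖ - ε ≤ N := by nlinarith
  have h2 : s ≤ N := by nlinarith
  calc min ((‖x‖ - ε) + s) (((‖x‖ - ε) + s) ^ 2) ≤ (‖x‖ - ε) + s := min_le_left _ _
    _ ≤ 5 * (1 + ε) * N := by nlinarith [mul_nonneg hε.le hN]

/-- There is a constant `C₂ > 0`, depending only on `ε`, such that
`min(ρ(u,v), ρ(u,v)²) ≤ C₂·‖Φ(u) − Φ(v)‖` for all points `u, v` of the space of
varying dimension. -/
theorem rho_min_sq_le_const_mul_norm_Phi (ε : ℝ) (hε : 0 < ε) :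
    ∃ C₂ > (0 : ℝ), ∀ u v : (EuclideanSpace ℝ (Fin 2)) ⊕ ℝ,
      memVD ε u → memVD ε v →
        min (rhoVD ε u v) ((rhoVD ε u v) ^ 2) ≤ C₂ * ‖PhiVD ε u - PhiVD ε v‖ := by
  refine ⟨5 * (1 + ε), by positivity, ?_⟩
  rintro (x | s) (y | s') hu hv
  · -- plane / plane
    simp only [memVD] at hu hv
    simp only [rhoVD, PhiVD]
    rw [normPhi_ll]
    exact plane_plane_case hε x y hu hv
  · -- plane / pole
    simp only [memVD] at hu hv
    simp only [rhoVD, PhiVD]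
    have hNsq : ‖((WithLp.equiv 2 (Fin 3 → ℝ)).symm ![Fmap ε x 0, Fmap ε x 1, (0:ℝ)] :
          EuclideanSpace ℝ (Fin 3)) - (WithLp.equiv 2 (Fin 3 → ℝ)).symm ![0, 0, s']‖ ^ 2 =
        (‖x‖ - ε) ^ 2 + s' ^ 2 := by
      rw [normPhi_lr, norm_Fmap hε hu]
    exact plane_pole_case hε x s' _ hu hv (norm_nonneg _) hNsq
  · -- pole / plane
    simp only [memVD] at hu hv
    simp only [rhoVD, PhiVD]
    rw [norm_sub_rev]
    have hNsq : ‖((WithLp.equiv 2 (Fin 3 → ℝ)).symm ![Fmap ε y 0, Fmap ε y 1, (0:ℝ)] :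
          EuclideanSpace ℝ (Fin 3)) - (WithLp.equiv 2 (Fin 3 → ℝ)).symm ![0, 0, s]‖ ^ 2 =
        (‖y‖ - ε) ^ 2 + s ^ 2 := by
      rw [normPhi_lr, norm_Fmap hε hv]
    exact plane_pole_case hε y s _ hv hu (norm_nonneg _) hNsq
  · -- pole / pole
    simp only [rhoVD, PhiVD]
    rw [normPhi_rr]
    have h0 : (0:ℝ) ≤ |s - s'| := abs_nonneg _
    calc min |s - s'| (|s - s'| ^ 2) ≤ |s - s'| := min_le_left _ _
      _ ≤ 5 * (1 + ε) * |s - s'| := by nlinarith [mul_nonneg hε.le h0]
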